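/- Let L > 0, κ > 0, w : [0,L] → ℝ continuous, and let μ be a finite Borel measure on [0,L] with total mass η := μ([0,L]) satisfying 0 < η ≤ 1. If p ∈ C([0,L]) satisfies −‖w‖_∞ ≤ p(x) ≤ 1 for all x ∈ [0,L], then Ψ_{w,μ}(p) also satisfies −‖w‖_∞ ≤ Ψ_{w,μ}(p)(x) ≤ 1 for all x ∈ [0,L]; that is, the set {p ∈ C([0,L]) : −‖w‖_∞ ≤ p ≤ 1} is invariant under Ψ_{w,μ}. -/

import Mathlib

open MeasureTheory

/-- The market-price map `Ψ_{w,μ}(p)(x) = a + c·p̄ − (1/2)(a + c·p̄ − w(x))⁺`,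
with `η = μ([0,L])`, `a = 1/(1+κη)`, `c = 1 − a` and `p̄ = (1/η)∫ p dμ`. -/
noncomputable def Psi (L κ : ℝ) (w : C(Set.Icc (0:ℝ) L, ℝ))
    (μ : Measure (Set.Icc (0:ℝ) L)) (p : C(Set.Icc (0:ℝ) L, ℝ))
    (x : Set.Icc (0:ℝ) L) : ℝ :=
  let η : ℝ := (μ Set.univ).toReal
  let a : ℝ := 1 / (1 + κ * η)
  let c : ℝ := 1 - a
  let pbar : ℝ := (1 / η) * ∫ y, p y ∂μ
  a + c * pbar - (1 / 2) * max (a + c * pbar - w x) 0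

/-- The set `{p : −‖w‖_∞ ≤ p ≤ 1}` is invariant under `Ψ_{w,μ}`. -/
theorem Psi_invariant (L κ : ℝ) (hL : 0 < L) (hκ : 0 < κ)
    (w : C(Set.Icc (0:ℝ) L, ℝ))
    (μ : Measure (Set.Icc (0:ℝ) L)) [IsFiniteMeasure μ]
    (hη : 0 < (μ Set.univ).toReal) (hη1 : (μ Set.univ).toReal ≤ 1)
    (p : C(Set.Icc (0:ℝ) L, ℝ))
    (hp : ∀ x : Set.Icc (0:ℝ) L,
      -(⨆ y : Set.Icc (0:ℝ) L, |w y|) ≤ p x ∧ p x ≤ 1) :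
    ∀ x : Set.Icc (0:ℝ) L,
      -(⨆ y : Set.Icc (0:ℝ) L, |w y|) ≤ Psi L κ w μ p x ∧ Psi L κ w μ p x ≤ 1 := by
  intro x
  set M : ℝ := ⨆ y : Set.Icc (0:ℝ) L, |w y| with hMdef
  have hbdd : BddAbove (Set.range fun y : Set.Icc (0:ℝ) L => |w y|) :=
    (isCompact_range (continuous_abs.comp w.continuous)).bddAbove
  have hMw : ∀ y : Set.Icc (0:ℝ) L, |w y| ≤ M := fun y => le_ciSup hbdd y
  have hM0 : 0 ≤ M := le_trans (abs_nonneg _) (hMw x)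
  set η : ℝ := (μ Set.univ).toReal with hηdef
  have hint : Integrable (fun y => p y) μ := p.continuous.integrable_of_hasCompactSupport (HasCompactSupport.of_compactSpace _)
  have hub : ∫ y, p y ∂μ ≤ η := by
    have := integral_mono hint (integrable_const (1:ℝ)) (fun y => (hp y).2)
    simp at this
    rw [show μ.real Set.univ = η from rfl] at this
    linarith
  have hlb : -(M * η) ≤ ∫ y, p y ∂μ := by
    have := integral_mono (integrable_const (-M)) hint (fun y => by
      have := (hp y).1
      simpa using this)
    simp only [integral_const, smul_eq_mul] at this
    rw [show μ.real Set.univ = η from rfl] at this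
    linarith [this]
  have ha0 : 0 < 1 + κ * η := by nlinarith
  set a : ℝ := 1 / (1 + κ * η) with hadef
  have ha : 0 < a := by positivity
  have ha1 : a ≤ 1 := by rw [hadef, div_le_one ha0]; nlinarith
  set pbar : ℝ := (1 / η) * ∫ y, p y ∂μ with hpbardef
  have hpb1 : pbar ≤ 1 := by
    rw [hpbardef]
    rw [div_mul_eq_mul_div, one_mul, div_le_one hη]
    exact hub
  have hpbM : -M ≤ pbar := by
    rw [hpbardef, div_mul_eq_mul_div, one_mul, le_div_iff₀ hη]
    nlinarith
  set c : ℝ := 1 - a with hcdef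
  have hc0 : 0 ≤ c := by linarith
  set m : ℝ := a + c * pbar with hmdef
  have hm1 : m ≤ 1 := by nlinarith
  have hmM : -M ≤ m := by nlinarith
  have hwx : -M ≤ w x := neg_le_of_abs_le (hMw x)
  have hmax0 : 0 ≤ max (a + c * pbar - w x) 0 := le_max_right _ _
  have hmaxle : max (a + c * pbar - w x) 0 ≤ m + M := by
    apply max_le <;> [skip; linarith] ; rw [hmdef]; linarith
  have hPsi : Psi L κ w μ p x = m - (1/2) * max (a + c * pbar - w x) 0 := rfl
  constructor
  · rw [hPsi]; linarith
  · rw [hPsi]; linarith
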